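/- Let 𝒜 ⊆ ℝ^m be a compact set, let A : ℝ × 𝒜 → ℝ and h : ℝ × 𝒜 → ℝ be continuous, 1-periodic in the first variable, with 0 < λ ≤ A(y,β) ≤ Λ for all (y,β). Let α : ℝ → 𝒜 be measurable and 1-periodic, set c_α(y) := A(y,α(y)) and p(y) := HM(c_α)/c_α(y). Suppose u : ℝ → ℝ is C² and 1-periodic and q, c ∈ ℝ satisfy sup_{β∈𝒜} ( −A(y,β)(q + u''(y)) + h(y,β) ) = c for every y. Then ∫₀¹ ( −A(y,α(y)) q + h(y,α(y)) ) p(y) dy ≤ c. -/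

import Mathlib

open MeasureTheory

/-- Harmonic mean of a 1-periodic function over one period:
`HM(b) = (∫₀¹ 1/b(y) dy)⁻¹`. -/
noncomputable def HM (b : ℝ → ℝ) : ℝ := (∫ y in (0:ℝ)..1, (b y)⁻¹)⁻¹

private lemma intInt_of_bdd {f : ℝ → ℝ} (hf : Measurable f) (M : ℝ)
    (hM : ∀ y ∈ Set.Ioc (0:ℝ) 1, |f y| ≤ M) : IntervalIntegrable f volume 0 1 := by
  rw [intervalIntegrable_iff, Set.uIoc_of_le (by norm_num : (0:ℝ) ≤ 1)]
  refine Integrable.mono' (g := fun _ => M) ?_ hf.aestronglyMeasurable.restrict ?_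
  · exact integrableOn_const measure_Ioc_lt_top.ne
  · filter_upwards [ae_restrict_mem measurableSet_Ioc] with y hy using hM y hy

/-- One-dimensional inequality `L̄_α(q) ≤ H̄(q)`: the homogenized linearization of a convex
HJB operator about an admissible control `α(y)`, computed by averaging against the invariant
density `p = HM(c_α)/c_α`, is a lower bound for the homogenized nonlinear operator. -/
theorem stmt_2 {m : ℕ}
    (𝓐 : Set (Fin m → ℝ)) (h𝓐 : IsCompact 𝓐)
    (A h : ℝ → (Fin m → ℝ) → ℝ)
    (hAcont : ContinuousOn (fun p : ℝ × (Fin m → ℝ) => A p.1 p.2) (Set.univ ×ˢ 𝓐))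
    (hhcont : ContinuousOn (fun p : ℝ × (Fin m → ℝ) => h p.1 p.2) (Set.univ ×ˢ 𝓐))
    (hAper : ∀ (y : ℝ) (β : Fin m → ℝ), A (y + 1) β = A y β)
    (hhper : ∀ (y : ℝ) (β : Fin m → ℝ), h (y + 1) β = h y β)
    (lam Lam : ℝ) (hlam : 0 < lam)
    (hell : ∀ (y : ℝ), ∀ β ∈ 𝓐, lam ≤ A y β ∧ A y β ≤ Lam)
    (α : ℝ → Fin m → ℝ) (hαmeas : Measurable α) (hαper : ∀ y, α (y + 1) = α y)
    (hαmem : ∀ y, α y ∈ 𝓐)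
    (p : ℝ → ℝ) (hp : ∀ y, p y = HM (fun z => A z (α z)) / A y (α y))
    (u : ℝ → ℝ) (hu : ContDiff ℝ 2 u) (huper : ∀ y, u (y + 1) = u y)
    (q c : ℝ)
    (hcell : ∀ y : ℝ,
      sSup ((fun β => -A y β * (q + deriv (deriv u) y) + h y β) '' 𝓐) = c) :
    ∫ y in (0:ℝ)..1, (-A y (α y) * q + h y (α y)) * p y ≤ c := by
  set cα : ℝ → ℝ := fun y => A y (α y) with hcαdef
  set hα : ℝ → ℝ := fun y => h y (α y) with hhαdef
  -- measurability of cα and hα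
  have hmem : ∀ y, ((y, α y) : ℝ × (Fin m → ℝ)) ∈ Set.univ ×ˢ 𝓐 := fun y => ⟨trivial, hαmem y⟩
  have gmeas : Measurable (fun y =>
      (⟨(y, α y), hmem y⟩ : (Set.univ ×ˢ 𝓐 : Set (ℝ × (Fin m → ℝ))))) :=
    (measurable_id.prodMk hαmeas).subtype_mk
  have mA : Measurable cα :=
    (continuousOn_iff_continuous_restrict.mp hAcont).measurable.comp gmeas
  have mh : Measurable hα :=
    (continuousOn_iff_continuous_restrict.mp hhcont).measurable.comp gmeas
  -- bounds
  have hb : ∀ y, lam ≤ cα y ∧ cα y ≤ Lam := fun y => hell y _ (hαmem y)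
  have hcpos : ∀ y, 0 < cα y := fun y => lt_of_lt_of_le hlam (hb y).1
  have hLam : 0 < Lam := lt_of_lt_of_le hlam ((hb 0).1.trans (hb 0).2)
  -- the integral I and HM
  set I : ℝ := ∫ y in (0:ℝ)..1, (cα y)⁻¹ with hIdef
  have hIint : IntervalIntegrable (fun y => (cα y)⁻¹) volume 0 1 := by
    refine intInt_of_bdd mA.inv lam⁻¹ (fun y _ => ?_)
    rw [abs_of_nonneg (inv_nonneg.2 (hcpos y).le)]
    exact inv_anti₀ hlam (hb y).1
  have hIpos : 0 < I := by
    refine intervalIntegral.intervalIntegral_pos_of_pos_on hIint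
      (fun x _ => inv_pos.2 (hcpos x)) (by norm_num)
  have hHMeq : HM cα = I⁻¹ := rfl
  have hHMpos : 0 < HM cα := by rw [hHMeq]; exact inv_pos.2 hIpos
  -- p facts
  have hp0 : ∀ y, 0 ≤ p y := fun y => by
    rw [hp y]; exact div_nonneg hHMpos.le (hcpos y).le
  have hpbd : ∀ y, p y ≤ HM cα / lam := fun y => by
    rw [hp y]; exact div_le_div_of_nonneg_left hHMpos.le hlam (hb y).1
  have hcp : ∀ y, cα y * p y = HM cα := fun y => by
    rw [hp y]
    exact mul_div_cancel₀ _ (hcpos y).ne'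
  have mp : Measurable p := by
    have : p = fun y => HM cα / cα y := funext hp
    rw [this]; exact mA.const_div _
  -- pointwise bound from the cell equation
  have hkey : ∀ y, (-cα y * q + hα y) * p y ≤ c * p y + HM cα * deriv (deriv u) y := by
    intro y
    have hbdd : BddAbove ((fun β => -A y β * (q + deriv (deriv u) y) + h y β) '' 𝓐) := by
      refine (h𝓐.image_of_continuousOn ?_).bddAbove
      have hA1 : ContinuousOn (fun β => A y β) 𝓐 := by
        refine hAcont.comp (Continuous.continuousOn (continuous_const.prodMk continuous_id)) (fun β hβ => ⟨trivial, hβ⟩)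
      have hh1 : ContinuousOn (fun β => h y β) 𝓐 := by
        refine hhcont.comp (Continuous.continuousOn (continuous_const.prodMk continuous_id)) (fun β hβ => ⟨trivial, hβ⟩)
      exact (hA1.neg.mul continuousOn_const).add hh1
    have he : -cα y * (q + deriv (deriv u) y) + hα y ≤ c := by
      rw [← hcell y]
      exact le_csSup hbdd ⟨α y, hαmem y, rfl⟩
    have h1 : (-cα y * q + hα y) * p y
        = (-cα y * (q + deriv (deriv u) y) + hα y) * p y
          + (cα y * p y) * deriv (deriv u) y := by ring
    rw [h1, hcp y]
    have := mul_le_mul_of_nonneg_right he (hp0 y)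
    linarith
  -- second derivative facts
  have hu2 : ContDiff ℝ (1 + 1) u := hu
  have hdu : ContDiff ℝ 1 (deriv u) := (contDiff_succ_iff_deriv.mp hu2).2.2
  have hdu2cont : Continuous (deriv (deriv u)) := hdu.continuous_deriv le_rfl
  have hduper : deriv u 1 = deriv u 0 := by
    have : (fun x => u (x + 1)) = u := funext huper
    calc deriv u 1 = deriv (fun x => u (x + 1)) 0 := by
          rw [deriv_comp_add_const]; norm_num
      _ = deriv u 0 := by rw [this]
  have hintu2 : ∫ y in (0:ℝ)..1, deriv (deriv u) y = 0 := by
    rw [intervalIntegral.integral_deriv_eq_sub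
      (fun x _ => (hdu.differentiable one_ne_zero).differentiableAt)
      (hdu2cont.intervalIntegrable 0 1)]
    rw [hduper]; ring
  -- bound on hα on (0,1]
  obtain ⟨Mh, hMh⟩ := (isCompact_Icc.prod h𝓐).exists_bound_of_continuousOn
    (hhcont.mono (Set.prod_mono (Set.subset_univ (Set.Icc (0:ℝ) 1)) le_rfl))
  have hαbd : ∀ y ∈ Set.Ioc (0:ℝ) 1, |hα y| ≤ Mh := fun y hy =>
    hMh (y, α y) ⟨Set.Ioc_subset_Icc_self hy, hαmem y⟩
  -- integrabilities
  have hint1 : IntervalIntegrable (fun y => (-cα y * q + hα y) * p y) volume 0 1 := by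
    refine intInt_of_bdd (((mA.neg.mul_const q).add mh).mul mp)
      ((Lam * |q| + Mh) * (HM cα / lam)) (fun y hy => ?_)
    rw [abs_mul]
    have h1 : |(-cα y * q + hα y)| ≤ Lam * |q| + Mh := by
      refine (abs_add_le _ _).trans (add_le_add ?_ (hαbd y hy))
      rw [abs_mul, abs_neg, abs_of_pos (hcpos y)]
      exact mul_le_mul_of_nonneg_right (hb y).2 (abs_nonneg q)
    have h2 : |p y| ≤ HM cα / lam := by
      rw [abs_of_nonneg (hp0 y)]; exact hpbd y
    exact mul_le_mul h1 h2 (abs_nonneg _) ((abs_nonneg _).trans h1)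
  have hintp : IntervalIntegrable p volume 0 1 := by
    refine intInt_of_bdd mp (HM cα / lam) (fun y _ => ?_)
    rw [abs_of_nonneg (hp0 y)]; exact hpbd y
  have hint2 : IntervalIntegrable
      (fun y => c * p y + HM cα * deriv (deriv u) y) volume 0 1 :=
    (hintp.const_mul c).add ((hdu2cont.intervalIntegrable 0 1).const_mul _)
  -- compute ∫ p = 1
  have hintpval : ∫ y in (0:ℝ)..1, p y = 1 := by
    have : ∀ y, p y = HM cα * (cα y)⁻¹ := fun y => by rw [hp y]; ring
    rw [show p = fun y => HM cα * (cα y)⁻¹ from funext this,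
      intervalIntegral.integral_const_mul, hHMeq, ← hIdef,
      inv_mul_cancel₀ hIpos.ne']
  -- conclude
  calc ∫ y in (0:ℝ)..1, (-cα y * q + hα y) * p y
      ≤ ∫ y in (0:ℝ)..1, (c * p y + HM cα * deriv (deriv u) y) := by
        exact intervalIntegral.integral_mono_on (by norm_num) hint1 hint2
          (fun y _ => hkey y)
    _ = c := by
        rw [intervalIntegral.integral_add (hintp.const_mul c)
          ((hdu2cont.intervalIntegrable 0 1).const_mul _),
          intervalIntegral.integral_const_mul,
          intervalIntegral.integral_const_mul, hintpval, hintu2]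
        ring
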